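/- Let C_h and C_z be n×n Hermitian positive definite complex matrices, let p_a, p_b ≥ 0, and set C_a := p_a·C_h + C_z, C_b := p_b·C_h + C_z, and Γ := C_z^{−1/2} C_h C_z^{−1/2}. Then tr{C_h C_b⁻¹ C_h C_a⁻¹} ≤ tr{Γ²}. (Upper bound in the paper's inequality (16).) -/

import Mathlib

open Matrix
open scoped ComplexOrder

/-- The square root of a positive semidefinite matrix, as defined in the older Mathlib
(`Matrix.PosSemidef.sqrt`, removed since). -/
noncomputable def Matrix.PosSemidef.sqrt {n 𝕜 : Type*} [Fintype n] [DecidableEq n] [RCLike 𝕜]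
    {A : Matrix n n 𝕜} (hA : A.PosSemidef) : Matrix n n 𝕜 :=
  hA.1.eigenvectorUnitary.1 * diagonal ((↑) ∘ (√·) ∘ hA.1.eigenvalues) *
    (star hA.1.eigenvectorUnitary : Matrix n n 𝕜)

private lemma psd_sqrt_conjTranspose {n : ℕ} {A : Matrix (Fin n) (Fin n) ℂ}
    (hA : A.PosSemidef) : (hA.sqrt)ᴴ = hA.sqrt := by
  unfold Matrix.PosSemidef.sqrt
  rw [conjTranspose_mul, conjTranspose_mul, diagonal_conjTranspose, ← star_eq_conjTranspose,
    ← star_eq_conjTranspose, star_star, Matrix.mul_assoc]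
  congr 3
  funext i
  simp

lemma Matrix.PosSemidef.sqrt_mul_self {n : ℕ} {A : Matrix (Fin n) (Fin n) ℂ}
    (hA : A.PosSemidef) : hA.sqrt * hA.sqrt = A := by
  unfold Matrix.PosSemidef.sqrt
  conv_rhs => rw [hA.1.spectral_theorem, Unitary.conjStarAlgAut_apply]
  have hU := Unitary.coe_star_mul_self hA.1.eigenvectorUnitary
  simp only [Matrix.mul_assoc]
  rw [← Matrix.mul_assoc (star (hA.1.eigenvectorUnitary : Matrix (Fin n) (Fin n) ℂ)), hU,
    Matrix.one_mul, ← Matrix.mul_assoc (diagonal _), diagonal_mul_diagonal]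
  congr 3
  ext i
  simp only [Function.comp_apply]
  rw [← RCLike.ofReal_mul, Real.mul_self_sqrt (hA.eigenvalues_nonneg i)]

private lemma smul_psd {n : ℕ} (p : ℝ) (hp : 0 ≤ p) {M : Matrix (Fin n) (Fin n) ℂ}
    (hM : M.PosSemidef) : ((p : ℂ) • M).PosSemidef := by
  refine ⟨?_, fun x => ?_⟩
  · unfold Matrix.IsHermitian
    rw [conjTranspose_smul, hM.isHermitian.eq]
    simp
  · convert smul_nonneg (Complex.zero_le_real.mpr hp) (hM.2 x) using 1
    rw [smul_eq_mul, Finsupp.mul_sum]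
    refine Finsupp.sum_congr fun i _ => ?_
    rw [Finsupp.mul_sum]
    refine Finsupp.sum_congr fun j _ => ?_
    simp only [Matrix.smul_apply, smul_eq_mul]
    ring

private lemma trace_psd_nonneg {n : ℕ} {M : Matrix (Fin n) (Fin n) ℂ} (hM : M.PosSemidef) :
    0 ≤ M.trace := by
  obtain ⟨B, rfl⟩ : ∃ B : Matrix (Fin n) (Fin n) ℂ, M = Bᴴ * B :=
    ⟨hM.sqrt, by rw [psd_sqrt_conjTranspose, hM.sqrt_mul_self]⟩
  rw [Matrix.trace]
  refine Finset.sum_nonneg fun i _ => ?_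
  rw [Matrix.diag_apply, Matrix.mul_apply]
  refine Finset.sum_nonneg fun j _ => ?_
  simpa [Matrix.conjTranspose_apply] using star_mul_self_nonneg (B j i)

private lemma trace_mul_psd_nonneg {n : ℕ} {P Q : Matrix (Fin n) (Fin n) ℂ}
    (hP : P.PosSemidef) (hQ : Q.PosSemidef) : 0 ≤ (P * Q).trace := by
  obtain ⟨B, rfl⟩ : ∃ B : Matrix (Fin n) (Fin n) ℂ, Q = Bᴴ * B :=
    ⟨hQ.sqrt, by rw [psd_sqrt_conjTranspose, hQ.sqrt_mul_self]⟩
  have : (P * (Bᴴ * B)).trace = (B * P * Bᴴ).trace := by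
    rw [← Matrix.mul_assoc, Matrix.trace_mul_cycle]
  rw [this]
  exact trace_psd_nonneg (hP.mul_mul_conjTranspose_same B)

private lemma inv_sub_inv_psd {n : ℕ} {Cz D : Matrix (Fin n) (Fin n) ℂ}
    (hz : Cz.PosDef) (hD : D.PosSemidef) :
    (Cz⁻¹ - (Cz + D)⁻¹).PosSemidef := by
  set Ca := Cz + D with hCaeq
  have hCa : Ca.PosDef := hz.add_posSemidef hD
  have hdCa : IsUnit Ca.det := hCa.det_pos.ne'.isUnit
  have hdCz : IsUnit Cz.det := hz.det_pos.ne'.isUnit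
  have h1 : Ca * Ca⁻¹ = 1 := Ca.mul_nonsing_inv hdCa
  have h2 : Ca⁻¹ * Ca = 1 := Ca.nonsing_inv_mul hdCa
  have h3 : Cz * Cz⁻¹ = 1 := Cz.mul_nonsing_inv hdCz
  have h4 : Cz⁻¹ * Cz = 1 := Cz.nonsing_inv_mul hdCz
  have e1 : ∀ t : Matrix (Fin n) (Fin n) ℂ, Ca⁻¹ * (Ca * t) = t := fun t => by
    rw [← Matrix.mul_assoc, h2, Matrix.one_mul]
  have e2 : ∀ t : Matrix (Fin n) (Fin n) ℂ, Ca * (Ca⁻¹ * t) = t := fun t => by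
    rw [← Matrix.mul_assoc, h1, Matrix.one_mul]
  have e3 : ∀ t : Matrix (Fin n) (Fin n) ℂ, Cz⁻¹ * (Cz * t) = t := fun t => by
    rw [← Matrix.mul_assoc, h4, Matrix.one_mul]
  have e4 : ∀ t : Matrix (Fin n) (Fin n) ℂ, Cz * (Cz⁻¹ * t) = t := fun t => by
    rw [← Matrix.mul_assoc, h3, Matrix.one_mul]
  have hDeq : D = Ca - Cz := by rw [hCaeq, add_sub_cancel_left]
  have key : Cz⁻¹ - Ca⁻¹ =
      Ca⁻¹ * D * Ca⁻¹ + (Ca⁻¹ * D) * Cz⁻¹ * (D * Ca⁻¹) := by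
    rw [hDeq]
    simp only [Matrix.mul_sub, Matrix.sub_mul, Matrix.mul_assoc, h1, h2, h3, h4,
      e1, e2, e3, e4, Matrix.mul_one, Matrix.one_mul]
    abel
  have hADj : (D * Ca⁻¹)ᴴ = Ca⁻¹ * D := by
    rw [conjTranspose_mul, hD.isHermitian.eq, hCa.inv.isHermitian.eq]
  rw [key]
  refine Matrix.PosSemidef.add ?_ ?_
  · have := hD.conjTranspose_mul_mul_same (Ca⁻¹)
    rwa [hCa.inv.isHermitian.eq] at this
  · have := (hz.inv.posSemidef).conjTranspose_mul_mul_same (D * Ca⁻¹)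
    rwa [hADj] at this

/-- Upper bound in the paper's inequality (16): with `Ca := p_a·C_h + C_z`,
`Cb := p_b·C_h + C_z` and `Γ := C_z^{−1/2} C_h C_z^{−1/2}`,
`tr{C_h Cb⁻¹ C_h Ca⁻¹} ≤ tr{Γ²}`. -/
theorem jeffreys_trace_upper_bound {n : ℕ} (Ch Cz : Matrix (Fin n) (Fin n) ℂ)
    (hh : Ch.PosDef) (hz : Cz.PosDef)
    (pa pb : ℝ) (hpa : 0 ≤ pa) (hpb : 0 ≤ pb)
    (Ca Cb Γ : Matrix (Fin n) (Fin n) ℂ)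
    (hCa : Ca = (pa : ℂ) • Ch + Cz) (hCb : Cb = (pb : ℂ) • Ch + Cz)
    (hΓ : Γ = (hz.posSemidef.sqrt)⁻¹ * Ch * (hz.posSemidef.sqrt)⁻¹) :
    (Matrix.trace (Ch * Cb⁻¹ * Ch * Ca⁻¹)).re ≤ (Matrix.trace (Γ * Γ)).re := by
  set S := hz.posSemidef.sqrt with hSdef
  have hSH : Sᴴ = S := psd_sqrt_conjTranspose hz.posSemidef
  have hSS : S * S = Cz := hz.posSemidef.sqrt_mul_self
  have hdS : IsUnit S.det := by
    have : S.det * S.det = Cz.det := by rw [← Matrix.det_mul, hSS]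
    have hne : Cz.det ≠ 0 := hz.det_pos.ne'
    refine isUnit_iff_ne_zero.mpr fun h => hne ?_
    rw [← this, h, zero_mul]
  have hs1 : S⁻¹ * S = 1 := S.nonsing_inv_mul hdS
  have hs2 : S * S⁻¹ = 1 := S.mul_nonsing_inv hdS
  have hSiH : (S⁻¹)ᴴ = S⁻¹ := by rw [Matrix.conjTranspose_nonsing_inv, hSH]
  have es1 : ∀ t : Matrix (Fin n) (Fin n) ℂ, S⁻¹ * (S * t) = t := fun t => by
    rw [← Matrix.mul_assoc, hs1, Matrix.one_mul]
  have es2 : ∀ t : Matrix (Fin n) (Fin n) ℂ, S * (S⁻¹ * t) = t := fun t => by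
    rw [← Matrix.mul_assoc, hs2, Matrix.one_mul]
  -- Γ is PSD and Hermitian
  have hΓpsd : Γ.PosSemidef := by
    have := hh.posSemidef.conjTranspose_mul_mul_same (S⁻¹)
    rwa [hSiH, ← hΓ] at this
  have hΓH : Γᴴ = Γ := hΓpsd.isHermitian.eq
  -- positivity of Ca, Cb and the scaled matrices
  have hCaPD : Ca.PosDef := by
    rw [hCa]; exact Matrix.PosDef.posSemidef_add (smul_psd pa hpa hh.posSemidef) hz
  have hCbPD : Cb.PosDef := by
    rw [hCb]; exact Matrix.PosDef.posSemidef_add (smul_psd pb hpb hh.posSemidef) hz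
  set A := S * Ca⁻¹ * S with hAdef
  set B := S * Cb⁻¹ * S with hBdef
  have hSCzS : S * Cz⁻¹ * S = 1 := by
    rw [← hSS, Matrix.mul_inv_rev, ← Matrix.mul_assoc, Matrix.mul_assoc (S * S⁻¹),
      hs2, hs1, Matrix.one_mul]
  have hIA : (1 - A).PosSemidef := by
    have h0 : (Cz⁻¹ - Ca⁻¹).PosSemidef := by
      have := inv_sub_inv_psd hz (smul_psd pa hpa hh.posSemidef)
      rwa [← add_comm ((pa : ℂ) • Ch) Cz, ← hCa] at this
    have hconj := h0.conjTranspose_mul_mul_same S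
    rw [hSH] at hconj
    have : S * (Cz⁻¹ - Ca⁻¹) * S = 1 - A := by
      rw [Matrix.mul_sub, Matrix.sub_mul, hSCzS, hAdef]
    rwa [this] at hconj
  have hIB : (1 - B).PosSemidef := by
    have h0 : (Cz⁻¹ - Cb⁻¹).PosSemidef := by
      have := inv_sub_inv_psd hz (smul_psd pb hpb hh.posSemidef)
      rwa [← add_comm ((pb : ℂ) • Ch) Cz, ← hCb] at this
    have hconj := h0.conjTranspose_mul_mul_same S
    rw [hSH] at hconj
    have : S * (Cz⁻¹ - Cb⁻¹) * S = 1 - B := by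
      rw [Matrix.mul_sub, Matrix.sub_mul, hSCzS, hBdef]
    rwa [this] at hconj
  have hBpsd : B.PosSemidef := by
    have := (hCbPD.inv.posSemidef).conjTranspose_mul_mul_same S
    rwa [hSH] at this
  have hΓΓpsd : (Γ * Γ).PosSemidef := by
    have := Matrix.posSemidef_conjTranspose_mul_self Γ
    rwa [hΓH] at this
  have hΓBΓpsd : (Γ * B * Γ).PosSemidef := by
    have := hBpsd.conjTranspose_mul_mul_same Γ
    rwa [hΓH] at this
  -- trace identity
  have t0 : Matrix.trace (Ch * Cb⁻¹ * Ch * Ca⁻¹) = Matrix.trace (Γ * B * Γ * A) := by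
    have hx : Γ * B * Γ * A = S⁻¹ * ((Ch * Cb⁻¹ * Ch * Ca⁻¹) * S) := by
      rw [hΓ, hBdef, hAdef]
      simp only [Matrix.mul_assoc, es1, es2]
    rw [hx, Matrix.trace_mul_comm S⁻¹ (Ch * Cb⁻¹ * Ch * Ca⁻¹ * S)]
    simp only [Matrix.mul_assoc, hs2, Matrix.mul_one]
  -- telescoping
  have tele : Matrix.trace (Γ * Γ) = Matrix.trace (Γ * B * Γ * A)
      + Matrix.trace ((Γ * Γ) * (1 - B)) + Matrix.trace ((Γ * B * Γ) * (1 - A)) := by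
    simp only [Matrix.mul_sub, Matrix.mul_one, Matrix.trace_sub]
    rw [Matrix.trace_mul_cycle Γ B Γ]
    ring
  have h1 : 0 ≤ Matrix.trace ((Γ * Γ) * (1 - B)) := trace_mul_psd_nonneg hΓΓpsd hIB
  have h2 : 0 ≤ Matrix.trace ((Γ * B * Γ) * (1 - A)) := trace_mul_psd_nonneg hΓBΓpsd hIA
  have h1r : 0 ≤ (Matrix.trace ((Γ * Γ) * (1 - B))).re := by
    simpa using (Complex.le_def.mp h1).1
  have h2r : 0 ≤ (Matrix.trace ((Γ * B * Γ) * (1 - A))).re := by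
    simpa using (Complex.le_def.mp h2).1
  rw [t0, tele]
  simp only [Complex.add_re]
  linarith
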